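/- For every integer k and integers n ≥ m ≥ 1, one has Σ_{l=0}^{n-m} m! C(n, l+m) S₁(l+m, m) C_{n-l-m}^{(k)} = Σ_{l=0}^{n-m} (m-1)! C(n-1, l+m-1) S₁(l+m-1, m-1) { (m-1) C_{n-l-m}^{(k)}(1) + C_{n-l-m}^{(k-1)}(1) }. -/

import Mathlib

open PowerSeries Finset

/-- Composition `F(G(t))` of formal power series (intended for `G` with zero
constant term, in which case `coeff n (G ^ m) = 0` for `m > n` and the finite
sum below computes the usual composition). -/
noncomputable def psComp (F G : PowerSeries ℝ) : PowerSeries ℝ :=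
  PowerSeries.mk fun n => ∑ m ∈ Finset.range (n + 1),
    (PowerSeries.coeff m F) * (PowerSeries.coeff n (G ^ m))

/-- The formal power series of `log (1 + t)`. -/
noncomputable def logSeries : PowerSeries ℝ :=
  PowerSeries.mk fun n => if n = 0 then 0 else (-1) ^ (n + 1) / n

/-- The polylogarithm factorial function `Lif_k(t) = ∑_{m ≥ 0} t^m / (m! (m+1)^k)`. -/
noncomputable def Lif (k : ℤ) : PowerSeries ℝ :=
  PowerSeries.mk fun m => 1 / ((m.factorial : ℝ) * ((m : ℝ) + 1) ^ k)

/-- The poly-Cauchy polynomial of the first kind `C_n^{(k)}(x)`, defined by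
`Lif_k(log(1+t)) / (1+t)^x = ∑_{n ≥ 0} C_n^{(k)}(x) t^n / n!`, where
`(1+t)^{-x} = exp (-x · log (1+t))`. -/
noncomputable def polyCauchy (k : ℤ) (n : ℕ) (x : ℝ) : ℝ :=
  (n.factorial : ℝ) * PowerSeries.coeff n
    (psComp (Lif k) logSeries *
      psComp (PowerSeries.rescale (-x) (PowerSeries.exp ℝ)) logSeries)

/-- The (signed) Stirling numbers of the first kind `S₁(l, m)`, defined by
`(log (1+t))^m = m! ∑_{l ≥ m} S₁(l,m) t^l / l!`. -/
noncomputable def S1 (l m : ℕ) : ℝ :=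
  (l.factorial : ℝ) / (m.factorial : ℝ) * PowerSeries.coeff l (logSeries ^ m)

/-- The ordinary Bernoulli numbers, via `t/(e^t - 1) = ∑ B_n t^n/n!`;
here `(mk fun m => 1/(m+1)!)` is the series `(e^t - 1)/t`. -/
noncomputable def Bern (n : ℕ) : ℝ :=
  (n.factorial : ℝ) * PowerSeries.coeff n
    (PowerSeries.mk fun m => (1 : ℝ) / (m + 1).factorial)⁻¹

/-- The Bernoulli polynomial of order `r`, via `(t/(e^t-1))^r e^{xt} = ∑ B_n^{(r)}(x) t^n/n!`. -/
noncomputable def bernPoly (r : ℕ) (n : ℕ) (x : ℝ) : ℝ :=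
  (n.factorial : ℝ) * PowerSeries.coeff n
    (((PowerSeries.mk fun m => (1 : ℝ) / (m + 1).factorial)⁻¹) ^ r *
      PowerSeries.rescale x (PowerSeries.exp ℝ))

/-- The series `log(1+t)/t`, so that `t / log(1+t) = Dlog⁻¹`. -/
noncomputable def Dlog : PowerSeries ℝ :=
  PowerSeries.mk fun n => (-1) ^ n / ((n : ℝ) + 1)

/-- The Cauchy numbers of the first kind, via `t/log(1+t) = ∑ C_n t^n/n!`. -/
noncomputable def cauchyNum (n : ℕ) : ℝ :=
  (n.factorial : ℝ) * PowerSeries.coeff n Dlog⁻¹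

/-- The numbers `T_n^{(r,k)}`, via
`(t/log(1+t))^r · Lif_k(log(1+t)) = ∑ T_n^{(r,k)} t^n/n!`. -/
noncomputable def T (r : ℕ) (k : ℤ) (n : ℕ) : ℝ :=
  (n.factorial : ℝ) * PowerSeries.coeff n (Dlog⁻¹ ^ r * psComp (Lif k) logSeries)

/-- The rising factorial `x^{(m)} = x (x+1) ⋯ (x+m-1)`. -/
noncomputable def risingFactorial (x : ℝ) (m : ℕ) : ℝ :=
  ∏ i ∈ Finset.range m, (x + i)

/-- Carlitz's polynomials `β_n^{(r)}(x)`, via `(t/log(1+t))^r (1+t)^x = ∑ β_n^{(r)}(x) t^n/n!`,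
where `(1+t)^x = exp (x log (1+t))`. -/
noncomputable def carlitz (r : ℕ) (n : ℕ) (x : ℝ) : ℝ :=
  (n.factorial : ℝ) * PowerSeries.coeff n
    (Dlog⁻¹ ^ r * psComp (PowerSeries.rescale x (PowerSeries.exp ℝ)) logSeries)

lemma coeff_pow_zero {G : PowerSeries ℝ} (hG : constantCoeff G = 0) {m i : ℕ} (h : i < m) :
    coeff i (G ^ m) = 0 :=
  (X_pow_dvd_iff.mp (pow_dvd_pow_of_dvd (X_dvd_iff.mpr hG) m)) i h


lemma coeff_psComp (F G : PowerSeries ℝ) (n : ℕ) :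
    coeff n (psComp F G) = ∑ m ∈ Finset.range (n + 1),
      (coeff m F) * (coeff n (G ^ m)) := by
  simp [psComp]


lemma coeff_psComp_ext {G : PowerSeries ℝ} (hG : constantCoeff G = 0) (F : PowerSeries ℝ)
    {n N : ℕ} (h : n ≤ N) :
    coeff n (psComp F G) = ∑ m ∈ Finset.range (N + 1),
      (coeff m F) * (coeff n (G ^ m)) := by
  rw [coeff_psComp]
  exact Finset.sum_subset (by simpa using Nat.succ_le_succ h)
    (fun m _ hm => by
      rw [coeff_pow_zero hG (by simpa using Nat.lt_of_succ_le (Nat.succ_le_of_lt (by simpa using hm)))]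
      ring)


lemma psComp_chain {G : PowerSeries ℝ} (hG : constantCoeff G = 0) (F : PowerSeries ℝ) :
    d⁄dX ℝ (psComp F G) = psComp (d⁄dX ℝ F) G * d⁄dX ℝ G := by
  ext n
  rw [coeff_derivative, coeff_psComp, Finset.sum_mul, PowerSeries.coeff_mul]
  have hR : ∀ p ∈ Finset.HasAntidiagonal.antidiagonal n,
      coeff p.1 (psComp (d⁄dX ℝ F) G) * coeff p.2 (d⁄dX ℝ G)
      = ∑ m ∈ Finset.range (n + 1), (coeff (m+1) F * (m+1)) *
          (coeff p.1 (G ^ m) * coeff p.2 (d⁄dX ℝ G)) := by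
    intro p hp
    rw [coeff_psComp_ext hG _ (by
      have := Finset.HasAntidiagonal.antidiagonal.fst_le hp; exact this), Finset.sum_mul]
    exact Finset.sum_congr rfl (fun m _ => by rw [coeff_derivative]; ring
    )
  rw [Finset.sum_congr rfl hR, Finset.sum_comm]
  -- LHS : ∑_{m ∈ range (n+2)} coeff m F * coeff (n+1) (G^m) * (n+1)
  -- reindex
  rw [Finset.sum_range_succ']
  have h0 : (coeff 0 F * coeff (n+1) (G ^ 0)) * ((n:ℝ)+1) = 0 := by simp
  rw [h0, add_zero]
  refine Finset.sum_congr rfl (fun m _ => ?_)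
  have hd : coeff (n+1) (G ^ (m+1)) * ((n:ℝ)+1) = coeff n (d⁄dX ℝ (G ^ (m+1))) := by
    rw [coeff_derivative]
  have hpow : coeff n (d⁄dX ℝ (G ^ (m+1))) = ((m:ℝ)+1) * coeff n (G ^ m * d⁄dX ℝ G) := by
    rw [Derivation.leibniz_pow (d⁄dX ℝ) G (m+1), smul_eq_mul, Nat.succ_sub_one, nsmul_eq_mul,
      ← map_natCast (C (R := ℝ)) (m+1), ← PowerSeries.smul_eq_C_mul, map_smul, smul_eq_mul]
    push_cast; ring
  rw [mul_assoc, hd, hpow, PowerSeries.coeff_mul, Finset.mul_sum, Finset.mul_sum]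
  exact Finset.sum_congr rfl (fun p hp => by ring)


lemma psComp_add (F₁ F₂ G : PowerSeries ℝ) :
    psComp (F₁ + F₂) G = psComp F₁ G + psComp F₂ G := by
  ext n
  simp [coeff_psComp, add_mul, Finset.sum_add_distrib]


lemma psComp_sub (F₁ F₂ G : PowerSeries ℝ) :
    psComp (F₁ - F₂) G = psComp F₁ G - psComp F₂ G := by
  ext n
  simp [coeff_psComp, sub_mul, Finset.sum_sub_distrib]


lemma psComp_neg (F G : PowerSeries ℝ) : psComp (-F) G = - psComp F G := by
  ext n
  simp [coeff_psComp]


lemma psComp_one (G : PowerSeries ℝ) : psComp 1 G = 1 := by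
  ext n
  rw [coeff_psComp]
  rw [Finset.sum_eq_single 0]
  · simp
  · intro m _ hm
    rw [PowerSeries.coeff_one, if_neg hm]
    ring
  · simp


lemma psComp_X_mul {G : PowerSeries ℝ} (hG : constantCoeff G = 0) (F : PowerSeries ℝ) :
    psComp (X * F) G = G * psComp F G := by
  ext n
  rw [coeff_psComp, PowerSeries.coeff_mul, Finset.sum_range_succ']
  have h0 : coeff 0 (X * F) * coeff n (G ^ 0) = 0 := by
    simp
  rw [h0, add_zero]
  have hR : ∀ p ∈ Finset.HasAntidiagonal.antidiagonal n,
      coeff p.1 G * coeff p.2 (psComp F G)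
      = ∑ m ∈ Finset.range (n + 1), coeff m F *
          (coeff p.1 G * coeff p.2 (G ^ m)) := by
    intro p hp
    rw [coeff_psComp_ext hG _ (Finset.HasAntidiagonal.antidiagonal.snd_le hp), Finset.mul_sum]
    exact Finset.sum_congr rfl fun m _ => by ring
  rw [Finset.sum_congr rfl hR, Finset.sum_comm, Finset.sum_range_succ]
  have hlast : ∑ p ∈ Finset.HasAntidiagonal.antidiagonal n, coeff n F *
      (coeff p.1 G * coeff p.2 (G ^ n)) = 0 := by
    refine Finset.sum_eq_zero fun p hp => ?_
    rcases Nat.lt_or_ge p.2 n with h | h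
    · rw [coeff_pow_zero hG h]; ring
    · have hp2 : p.2 = n := le_antisymm (Finset.HasAntidiagonal.antidiagonal.snd_le hp) h
      have hp1 : p.1 = 0 := by
        have := Finset.HasAntidiagonal.mem_antidiagonal.mp hp; omega
      rw [hp1, hp2] at *
      rw [show coeff 0 G = 0 from by rw [← PowerSeries.coeff_zero_eq_constantCoeff] at hG; exact hG]
      ring
  rw [hlast, add_zero]
  refine Finset.sum_congr rfl fun m _ => ?_
  rw [PowerSeries.coeff_succ_X_mul, pow_succ', PowerSeries.coeff_mul, Finset.mul_sum]


lemma const_logSeries : constantCoeff logSeries = 0 := by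
  rw [← PowerSeries.coeff_zero_eq_constantCoeff]
  simp [logSeries]


lemma dlog : d⁄dX ℝ logSeries = PowerSeries.mk fun n => (-1) ^ n := by
  ext n
  rw [coeff_derivative]
  simp only [logSeries, PowerSeries.coeff_mk, Nat.succ_ne_zero, if_false]
  have h : ((n:ℝ) + 1) ≠ 0 := by positivity
  push_cast
  field_simp
  ring


lemma one_add_X_mul_dlog : (1 + X) * d⁄dX ℝ logSeries = 1 := by
  rw [dlog, add_mul, one_mul]
  ext n
  cases n with
  | zero => simp
  | succ j =>
    rw [map_add, PowerSeries.coeff_succ_X_mul, PowerSeries.coeff_mk, PowerSeries.coeff_mk,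
      PowerSeries.coeff_one, if_neg (Nat.succ_ne_zero j)]
    ring


lemma X_mul_dLif (k : ℤ) : X * d⁄dX ℝ (Lif k) = Lif (k - 1) - Lif k := by
  ext n
  rw [map_sub]
  cases n with
  | zero =>
    simp [Lif, PowerSeries.coeff_zero_eq_constantCoeff]
  | succ j =>
    rw [PowerSeries.coeff_succ_X_mul, coeff_derivative]
    simp only [Lif, PowerSeries.coeff_mk]
    have h1 : ((j:ℝ) + 1 + 1) ≠ 0 := by positivity
    have h2 : ((j+1).factorial : ℝ) ≠ 0 := by positivity
    have hz : ((j:ℝ) + 1 + 1) ^ (k - 1) = ((j:ℝ) + 1 + 1) ^ k / ((j:ℝ) + 1 + 1) := by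
      rw [zpow_sub_one₀ h1]; ring
    have hzk : ((j:ℝ) + 1 + 1) ^ k ≠ 0 := zpow_ne_zero _ h1
    push_cast
    rw [hz]
    field_simp
    ring


noncomputable def En : PowerSeries ℝ := PowerSeries.rescale (-1) (PowerSeries.exp ℝ)


lemma coeff_En (n : ℕ) : coeff n En = (-1) ^ n / n.factorial := by
  rw [En, PowerSeries.coeff_rescale, PowerSeries.coeff_exp]
  simp [div_eq_mul_inv]


lemma dEn : d⁄dX ℝ En = - En := by
  ext n
  rw [coeff_derivative, map_neg, coeff_En, coeff_En, pow_succ]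
  have h2 : ((n+1).factorial : ℝ) ≠ 0 := by positivity
  rw [Nat.factorial_succ]
  push_cast
  have h3 : ((n:ℝ)+1) ≠ 0 := by positivity
  have h4 : ((n.factorial : ℝ)) ≠ 0 := by positivity
  field_simp


lemma eq_C_of_deriv_zero {f : PowerSeries ℝ} (h : d⁄dX ℝ f = 0) :
    f = C (constantCoeff f) := by
  ext n
  cases n with
  | zero => simp [PowerSeries.coeff_zero_eq_constantCoeff]
  | succ j =>
    have hcf : coeff (j+1) f * ((j:ℝ)+1) = 0 := by
      have := congrArg (fun g => coeff j g) h
      simpa only [coeff_derivative, map_zero] using this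
    have hj : ((j:ℝ) + 1) ≠ 0 := by positivity
    have hz : coeff (j+1) f = 0 := by
      rcases mul_eq_zero.mp hcf with h5 | h5
      · exact h5
      · exact absurd h5 hj
    rw [hz, PowerSeries.coeff_C, if_neg (Nat.succ_ne_zero j)]


lemma psComp_En_eq : psComp En logSeries = d⁄dX ℝ logSeries := by
  have hG := const_logSeries
  have hH : d⁄dX ℝ ((1 + X) * psComp En logSeries) = 0 := by
    rw [Derivation.leibniz, smul_eq_mul, smul_eq_mul, psComp_chain hG, dEn, psComp_neg]
    have hd1 : d⁄dX ℝ (1 + X : ℝ⟦X⟧) = 1 := by simp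
    rw [hd1, mul_one]
    have h2 : (1 + X) * (-psComp En logSeries * d⁄dX ℝ logSeries)
        = - (psComp En logSeries * ((1+X) * d⁄dX ℝ logSeries)) := by ring
    rw [h2, one_add_X_mul_dlog, mul_one]
    ring
  have hc : constantCoeff ((1 + X) * psComp En logSeries) = 1 := by
    rw [map_mul]
    have hc1 : constantCoeff (1 + X : ℝ⟦X⟧) = 1 := by simp
    have hc2 : constantCoeff (psComp En logSeries) = 1 := by
      rw [← PowerSeries.coeff_zero_eq_constantCoeff, coeff_psComp]
      simp [coeff_En]
    rw [hc1, hc2, mul_one]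
  have h1 : (1 + X) * psComp En logSeries = 1 := by
    rw [eq_C_of_deriv_zero hH, hc, map_one]
  calc psComp En logSeries
      = psComp En logSeries * ((1 + X) * d⁄dX ℝ logSeries) := by
        rw [one_add_X_mul_dlog, mul_one]
    _ = ((1 + X) * psComp En logSeries) * d⁄dX ℝ logSeries := by ring
    _ = d⁄dX ℝ logSeries := by rw [h1, one_mul]


lemma main_deriv (k : ℤ) (m' : ℕ) :
    d⁄dX ℝ (logSeries ^ (m'+1) * psComp (Lif k) logSeries)
    = logSeries ^ m' * ((((m' : ℝ)) • psComp (Lif k) logSeries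
        + psComp (Lif (k-1)) logSeries) * d⁄dX ℝ logSeries) := by
  have hG := const_logSeries
  have hBA : logSeries * psComp (d⁄dX ℝ (Lif k)) logSeries
      = psComp (Lif (k-1)) logSeries - psComp (Lif k) logSeries := by
    rw [← psComp_X_mul hG, X_mul_dLif, psComp_sub]
  have hpow : d⁄dX ℝ (logSeries ^ (m'+1))
      = C (((m'+1 : ℕ) : ℝ)) * (logSeries ^ m' * d⁄dX ℝ logSeries) := by
    rw [Derivation.leibniz_pow, smul_eq_mul, Nat.succ_sub_one, nsmul_eq_mul,
      ← map_natCast (C (R := ℝ)) (m'+1)]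
  rw [Derivation.leibniz, smul_eq_mul, smul_eq_mul, psComp_chain hG, hpow,
    PowerSeries.smul_eq_C_mul]
  have h5 : logSeries ^ (m'+1) * (psComp (d⁄dX ℝ (Lif k)) logSeries * d⁄dX ℝ logSeries)
      = logSeries ^ m' * ((logSeries * psComp (d⁄dX ℝ (Lif k)) logSeries) * d⁄dX ℝ logSeries) := by
    ring
  rw [h5, hBA]
  have h6 : C (((m'+1 : ℕ) : ℝ)) = C ((m' : ℝ)) + 1 := by
    push_cast
    rw [map_add, map_one]
  rw [h6]
  ring


lemma coeff_mul_pow_sum (A : PowerSeries ℝ) {n m : ℕ} (hmn : m ≤ n) :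
    coeff n (logSeries ^ m * A)
    = ∑ l ∈ Finset.range (n - m + 1),
        coeff (l + m) (logSeries ^ m) * coeff (n - (l + m)) A := by
  rw [PowerSeries.coeff_mul, Finset.Nat.sum_antidiagonal_eq_sum_range_succ_mk]
  rw [Finset.range_eq_Ico, ← Finset.sum_Ico_consecutive _ (Nat.zero_le m) (by omega : m ≤ n+1)]
  have h1 : ∑ i ∈ Finset.Ico 0 m, coeff i (logSeries ^ m) * coeff (n - i) A = 0 :=
    Finset.sum_eq_zero fun i hi => by
      rw [coeff_pow_zero const_logSeries (Finset.mem_Ico.mp hi).2]; ring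
  rw [h1, zero_add, Finset.sum_Ico_eq_sum_range]
  have h2 : n + 1 - m = n - m + 1 := by omega
  rw [h2]
  exact Finset.sum_congr rfl fun l _ => by rw [add_comm m l]


lemma polyCauchy_zero' (k : ℤ) (j : ℕ) :
    polyCauchy k j 0 = (j.factorial : ℝ) * coeff j (psComp (Lif k) logSeries) := by
  rw [polyCauchy, neg_zero, PowerSeries.rescale_zero]
  simp only [RingHom.comp_apply, PowerSeries.constantCoeff_exp, map_one, psComp_one, mul_one]


lemma polyCauchy_one' (k : ℤ) (j : ℕ) :
    polyCauchy k j 1 = (j.factorial : ℝ) *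
      coeff j (psComp (Lif k) logSeries * d⁄dX ℝ logSeries) := by
  rw [polyCauchy, show PowerSeries.rescale (-(1:ℝ)) (PowerSeries.exp ℝ) = En from rfl,
    psComp_En_eq]


/-- Theorem 5 of the paper. -/
theorem polyCauchy_stirling_identity (k : ℤ) (n m : ℕ) (hm : 1 ≤ m) (hmn : m ≤ n) :
    ∑ l ∈ Finset.range (n - m + 1),
        (m.factorial : ℝ) * (n.choose (l + m) : ℝ) * S1 (l + m) m *
          polyCauchy k (n - l - m) 0 =
      ∑ l ∈ Finset.range (n - m + 1),
        ((m - 1).factorial : ℝ) * ((n - 1).choose (l + m - 1) : ℝ) *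
          S1 (l + m - 1) (m - 1) *
          (((m : ℝ) - 1) * polyCauchy k (n - l - m) 1 +
            polyCauchy (k - 1) (n - l - m) 1) := by
  obtain ⟨m', rfl⟩ : ∃ m', m = m' + 1 := ⟨m - 1, by omega⟩
  obtain ⟨n', rfl⟩ : ∃ n', n = n' + 1 := ⟨n - 1, by omega⟩
  have hm'n' : m' ≤ n' := by omega
  set Ak := psComp (Lif k) logSeries with hAkdef
  set Bk := psComp (Lif (k-1)) logSeries with hBkdef
  set dG := d⁄dX ℝ logSeries with hdGdef
  set W := ((m' : ℝ) • Ak + Bk) * dG with hWdef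
  have hfacne : ∀ j : ℕ, (j.factorial : ℝ) ≠ 0 := fun j => by positivity
  -- LHS
  have hL : ∑ l ∈ Finset.range (n' + 1 - (m' + 1) + 1),
        ((m' + 1).factorial : ℝ) * ((n' + 1).choose (l + (m' + 1)) : ℝ) *
          S1 (l + (m' + 1)) (m' + 1) * polyCauchy k (n' + 1 - l - (m' + 1)) 0
      = ((n' + 1).factorial : ℝ) * coeff (n' + 1) (logSeries ^ (m' + 1) * Ak) := by
    rw [coeff_mul_pow_sum Ak (by omega : m' + 1 ≤ n' + 1), Finset.mul_sum]
    refine Finset.sum_congr rfl fun l hl => ?_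
    have hlle : l ≤ n' - m' := by
      have := Finset.mem_range.mp hl; omega
    have hr : l + (m' + 1) ≤ n' + 1 := by omega
    have hj : n' + 1 - l - (m' + 1) = n' + 1 - (l + (m' + 1)) := by omega
    rw [hj, S1, polyCauchy_zero', Nat.cast_choose ℝ hr, ← hAkdef]
    have h1 := hfacne (m' + 1)
    have h2 := hfacne (l + (m' + 1))
    have h3 := hfacne (n' + 1 - (l + (m' + 1)))
    field_simp
  -- RHS
  have hR : ∑ l ∈ Finset.range (n' + 1 - (m' + 1) + 1),
        ((m' + 1 - 1).factorial : ℝ) * ((n' + 1 - 1).choose (l + (m' + 1) - 1) : ℝ) *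
          S1 (l + (m' + 1) - 1) (m' + 1 - 1) *
          ((((m' + 1 : ℕ) : ℝ) - 1) * polyCauchy k (n' + 1 - l - (m' + 1)) 1 +
            polyCauchy (k - 1) (n' + 1 - l - (m' + 1)) 1)
      = ((n').factorial : ℝ) * coeff n' (logSeries ^ m' * W) := by
    rw [coeff_mul_pow_sum W hm'n', Finset.mul_sum]
    have hrange : n' + 1 - (m' + 1) + 1 = n' - m' + 1 := by omega
    rw [hrange]
    refine Finset.sum_congr rfl fun l hl => ?_
    have hlle : l ≤ n' - m' := by
      have := Finset.mem_range.mp hl; omega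
    have e1 : m' + 1 - 1 = m' := by omega
    have e2 : l + (m' + 1) - 1 = l + m' := by omega
    have e3 : n' + 1 - l - (m' + 1) = n' - (l + m') := by omega
    have hr : l + m' ≤ n' := by omega
    have hmr : ((m' + 1 : ℕ) : ℝ) - 1 = (m' : ℝ) := by push_cast; ring
    have e0 : n' + 1 - 1 = n' := by omega
    rw [e0, e1, e2, e3, hmr, S1, polyCauchy_one', polyCauchy_one', Nat.cast_choose ℝ hr,
      ← hAkdef, ← hBkdef, ← hdGdef]
    have hw : coeff (n' - (l + m')) W
        = (m' : ℝ) * coeff (n' - (l + m')) (Ak * dG)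
          + coeff (n' - (l + m')) (Bk * dG) := by
      rw [hWdef, add_mul, smul_mul_assoc, map_add, map_smul, smul_eq_mul]
    rw [hw]
    have h1 := hfacne m'
    have h2 := hfacne (l + m')
    have h3 := hfacne (n' - (l + m'))
    field_simp
  rw [hL, hR]
  -- derivative step
  have hd : coeff n' (d⁄dX ℝ (logSeries ^ (m' + 1) * Ak))
      = coeff (n' + 1) (logSeries ^ (m' + 1) * Ak) * ((n' : ℝ) + 1) :=
    coeff_derivative _ n'
  have hmain := main_deriv k m'
  rw [← hAkdef, ← hBkdef, ← hdGdef, ← hWdef] at hmain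
  rw [← hmain, hd] at *
  rw [Nat.factorial_succ]
  push_cast
  ring
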